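/- arXiv:1409.6276 — 2 statements merged into one kernel-verified Lean document; each statement's English description precedes it below -/
import Mathlib

section
/- Let X be a random variable with Student's t-distribution with n degrees of freedom. Then: (i) for all z ≥ 1, Pr{|X| ≥ z} ≤ z·((n+1)/(n+z²))^{(n+1)/2}; (ii) for all z with 0 < z ≤ 1, Pr{|X| ≤ z} ≤ z·((n+1)/(n+z²))^{(n+1)/2}. -/
set_option maxHeartbeats 1000000

open MeasureTheory Real Set Filter

lemma gautschi (n : ℕ) (hn : 0 < n) :
    2 * Real.Gamma (((n:ℝ)+1)/2) ≤ Real.sqrt ((n:ℝ) * π) * Real.Gamma ((n:ℝ)/2) := by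
  set x : ℝ := (n:ℝ)/2 with hx
  have hx0 : 0 < x := by positivity
  have hΓx : 0 < Real.Gamma x := Real.Gamma_pos_of_pos hx0
  have hΓy : 0 < Real.Gamma (x+1) := Real.Gamma_pos_of_pos (by linarith)
  have hconv := Real.convexOn_log_Gamma.2 (Set.mem_Ioi.2 hx0) (Set.mem_Ioi.2 (by linarith : (0:ℝ) < x + 1))
    (by norm_num : (0:ℝ) ≤ 1/2) (by norm_num : (0:ℝ) ≤ 1/2) (by norm_num)
  simp only [Function.comp, smul_eq_mul] at hconv
  have hmid : (1/2 : ℝ) * x + (1/2) * (x+1) = ((n:ℝ)+1)/2 := by rw [hx]; ring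
  rw [hmid] at hconv
  -- Γ((n+1)/2) ≤ exp (1/2 log Γx + 1/2 log Γ(x+1))
  have hΓm : 0 < Real.Gamma (((n:ℝ)+1)/2) := Real.Gamma_pos_of_pos (by positivity)
  have h1 : Real.Gamma (((n:ℝ)+1)/2) ≤ Real.Gamma x ^ ((1:ℝ)/2) * Real.Gamma (x+1) ^ ((1:ℝ)/2) := by
    have := Real.exp_le_exp.2 hconv
    rw [Real.exp_log hΓm, Real.exp_add] at this
    rw [Real.rpow_def_of_pos hΓx, Real.rpow_def_of_pos hΓy]
    calc Real.Gamma (((n:ℝ)+1)/2) ≤ Real.exp ((1/2) * Real.log (Real.Gamma x)) *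
          Real.exp ((1/2) * Real.log (Real.Gamma (x+1))) := this
      _ = _ := by rw [mul_comm ((1:ℝ)/2), mul_comm ((1:ℝ)/2)]
  have hΓy_eq : Real.Gamma (x+1) = x * Real.Gamma x := Real.Gamma_add_one hx0.ne'
  have h2 : Real.Gamma x ^ ((1:ℝ)/2) * Real.Gamma (x+1) ^ ((1:ℝ)/2) =
      Real.sqrt x * Real.Gamma x := by
    rw [hΓy_eq, Real.mul_rpow hx0.le hΓx.le, Real.sqrt_eq_rpow]
    rw [show Real.Gamma x ^ ((1:ℝ)/2) * (x ^ ((1:ℝ)/2) * Real.Gamma x ^ ((1:ℝ)/2))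
        = x ^ ((1:ℝ)/2) * (Real.Gamma x ^ ((1:ℝ)/2) * Real.Gamma x ^ ((1:ℝ)/2)) from by ring]
    rw [← Real.rpow_add hΓx]
    norm_num
  rw [h2] at h1
  have hsq : 2 * Real.sqrt x ≤ Real.sqrt ((n:ℝ) * π) := by
    rw [show (2:ℝ) * Real.sqrt x = Real.sqrt (4 * x) from by
      rw [show (4:ℝ) * x = 2^2 * x from by ring, Real.sqrt_mul (by positivity),
        Real.sqrt_sq (by norm_num : (0:ℝ) ≤ 2)]]
    apply Real.sqrt_le_sqrt
    rw [hx]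
    nlinarith [Real.pi_gt_three, (by exact_mod_cast hn : (1:ℝ) ≤ (n:ℝ))]
  calc 2 * Real.Gamma (((n:ℝ)+1)/2) ≤ 2 * (Real.sqrt x * Real.Gamma x) := by linarith
    _ = (2 * Real.sqrt x) * Real.Gamma x := by ring
    _ ≤ Real.sqrt ((n:ℝ) * π) * Real.Gamma x := by
        apply mul_le_mul_of_nonneg_right hsq hΓx.le

/-- Two-sided tail bounds for a Student's t random variable with `n` degrees of freedom. -/
theorem studentT_tail
    {Ω : Type*} [MeasurableSpace Ω] (P : Measure Ω) [IsProbabilityMeasure P]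
    (n : ℕ) (hn : 0 < n) (X : Ω → ℝ)
    (hmeas : Measurable X)
    (hdist : Measure.map X P =
      volume.withDensity (fun x => ENNReal.ofReal
        (Real.Gamma (((n : ℝ) + 1) / 2)
          / (Real.sqrt (n * π) * Real.Gamma ((n : ℝ) / 2)
              * (1 + x ^ 2 / n) ^ (((n : ℝ) + 1) / 2))))) :
    (∀ z : ℝ, 1 ≤ z →
      P {ω | z ≤ |X ω|} ≤
        ENNReal.ofReal
          (z * (((n : ℝ) + 1) / (n + z ^ 2)) ^ (((n : ℝ) + 1) / 2))) ∧
    (∀ z : ℝ, 0 < z → z ≤ 1 →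
      P {ω | |X ω| ≤ z} ≤
        ENNReal.ofReal
          (z * (((n : ℝ) + 1) / (n + z ^ 2)) ^ (((n : ℝ) + 1) / 2))) := by
  have hnr : (1:ℝ) ≤ (n:ℝ) := by exact_mod_cast hn
  have hn0 : (0:ℝ) < (n:ℝ) := by linarith
  set p : ℝ := ((n:ℝ)+1)/2 with hpdef
  have hp1 : 1 ≤ p := by rw [hpdef]; linarith
  have hp0 : 0 < p := by linarith
  set B : ℝ := Real.sqrt ((n:ℝ) * π) * Real.Gamma ((n:ℝ)/2) with hBdef
  have hB0 : 0 < B := by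
    apply mul_pos (Real.sqrt_pos.2 (by positivity)) (Real.Gamma_pos_of_pos (by positivity))
  set C : ℝ := Real.Gamma p / B with hCdef
  have hC0 : 0 < C := div_pos (Real.Gamma_pos_of_pos hp0) hB0
  have h2C : 2 * C ≤ 1 := by
    rw [hCdef, mul_div_assoc', div_le_one hB0, hpdef, hBdef]
    exact gautschi n hn
  set f : ℝ → ℝ := fun x => Real.Gamma p / (B * (1 + x^2/(n:ℝ)) ^ p) with hfdef
  have hbase : ∀ x : ℝ, 0 < 1 + x^2/(n:ℝ) := fun x => by positivity
  have hbase1 : ∀ x : ℝ, 1 ≤ (1 + x^2/(n:ℝ)) ^ p := fun x =>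
    Real.one_le_rpow (by nlinarith [div_nonneg (sq_nonneg x) hn0.le]) hp0.le
  have hfC : ∀ x, f x = C / (1 + x^2/(n:ℝ)) ^ p := fun x => by
    rw [hfdef, hCdef, div_div]
  have hfpos : ∀ x, 0 < f x := fun x => by
    rw [hfC]; exact div_pos hC0 (by linarith [hbase1 x])
  have hfleC : ∀ x, f x ≤ C := fun x => by
    rw [hfC]; exact div_le_self hC0.le (hbase1 x)
  have hfalt : ∀ x, f x = C * (n:ℝ)^p * ((n:ℝ) + x^2) ^ (-p) := by
    intro x
    rw [hfC, Real.rpow_neg (by positivity), show 1 + x^2/(n:ℝ) = ((n:ℝ)+x^2)/(n:ℝ) from by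
      field_simp, Real.div_rpow (by positivity) hn0.le]
    field_simp
  have hfeven : ∀ x, f (-x) = f x := fun x => by rw [hfdef]; norm_num
  have hfcont : Continuous f := by
    rw [hfdef]
    apply continuous_const.div
    · exact continuous_const.mul ((continuous_const.add
        ((continuous_pow 2).div_const _)).rpow_const (fun x => Or.inr hp0.le))
    · intro x
      have := hbase1 x
      positivity
  -- measure theory setup
  have hprob : IsProbabilityMeasure (Measure.map X P) := Measure.isProbabilityMeasure_map hmeas.aemeasurable
  have hlint : (∫⁻ x, ENNReal.ofReal (f x)) = 1 := by
    have h := hprob.measure_univ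
    rw [hdist, withDensity_apply _ MeasurableSet.univ, Measure.restrict_univ] at h
    exact h
  have hfint : Integrable f := by
    refine ⟨hfcont.aestronglyMeasurable, ?_⟩
    rw [hasFiniteIntegral_iff_ofReal (ae_of_all _ fun x => (hfpos x).le), hlint]
    exact ENNReal.one_lt_top
  have hint1 : ∫ x, f x = 1 := by
    rw [integral_eq_lintegral_of_nonneg_ae (ae_of_all _ fun x => (hfpos x).le)
      hfcont.aestronglyMeasurable, hlint, ENNReal.toReal_one]
  have hPs : ∀ s : Set ℝ, MeasurableSet s →
      P {ω | X ω ∈ s} = ENNReal.ofReal (∫ x in s, f x) := by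
    intro s hs
    have : P {ω | X ω ∈ s} = (Measure.map X P) s := (Measure.map_apply hmeas hs).symm
    rw [this, hdist, withDensity_apply _ hs,
      ← ofReal_integral_eq_lintegral_ofReal hfint.integrableOn
        (ae_of_all _ fun x => (hfpos x).le)]
  -- symmetric integral facts
  have hIoc_eq : ∀ z : ℝ, 0 ≤ z → ∫ x in (-z)..z, f x = 2 * ∫ x in (0:ℝ)..z, f x := by
    intro z hz
    have h1 : ∫ x in (-z)..(0:ℝ), f x = ∫ x in (0:ℝ)..z, f x := by
      have := intervalIntegral.integral_comp_neg (a := (0:ℝ)) (b := z) f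
      simp only [hfeven, neg_zero] at this
      exact this.symm
    rw [← intervalIntegral.integral_add_adjacent_intervals (b := (0:ℝ))
      hfint.intervalIntegrable hfint.intervalIntegrable, h1]
    ring
  have hIoi0 : (2:ℝ) * ∫ x in Ioi (0:ℝ), f x = 1 := by
    have hc := integral_add_compl (measurableSet_Ioi (a := (0:ℝ))) hfint (f := f)
    rw [compl_Ioi, hint1] at hc
    have h2 : ∫ x in Iic (0:ℝ), f x = ∫ x in Ioi (0:ℝ), f x := by
      have := integral_comp_neg_Iic (0:ℝ) f
      simp only [hfeven, neg_zero] at this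
      rw [← this]
    rw [h2] at hc
    linarith
  -- the functions
  set g : ℝ → ℝ := fun z => z * (((n:ℝ)+1)/((n:ℝ)+z^2)) ^ p with hgdef
  set T : ℝ → ℝ := fun z => 1 - 2 * ∫ x in (0:ℝ)..z, f x with hTdef
  have hT' : ∀ z : ℝ, HasDerivAt T (-(2 * f z)) z := by
    intro z
    have := (hfcont.integral_hasStrictDerivAt 0 z).hasDerivAt
    simpa using (this.const_mul 2).const_sub 1
  have hset_T : ∀ z : ℝ, 0 ≤ z → ∫ x in {x : ℝ | z ≤ |x|}, f x = T z := by
    intro z hz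
    have hsm : MeasurableSet {x : ℝ | z ≤ |x|} :=
      (isClosed_le continuous_const continuous_abs).measurableSet
    have hcompl : {x : ℝ | z ≤ |x|}ᶜ = Ioo (-z) z := by
      ext x; simp [not_le, abs_lt]
    have hc := integral_add_compl hsm hfint (f := f)
    rw [hcompl, hint1] at hc
    have hIoo : ∫ x in Ioo (-z) z, f x = ∫ x in (-z)..z, f x := by
      rw [intervalIntegral.integral_of_le (by linarith), ← integral_Ioc_eq_integral_Ioo]
    rw [hIoo, hIoc_eq z hz] at hc
    simp only [hTdef]
    linarith
  -- derivative of g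
  have hA : ∀ z : ℝ, (0:ℝ) < (n:ℝ) + z^2 := fun z => by positivity
  have hgfun : g = fun z : ℝ => ((n:ℝ)+1)^p * (z * ((n:ℝ)+z^2) ^ (-p)) := by
    funext z
    simp only [hgdef]
    rw [Real.div_rpow (by positivity) (hA z).le, Real.rpow_neg (hA z).le, div_eq_mul_inv]
    ring
  have hE1 : ∀ z : ℝ, ((n:ℝ)+z^2)^(-p) = ((n:ℝ)+z^2) * ((n:ℝ)+z^2)^(-(p+1)) := by
    intro z
    rw [show -p = 1 + -(p+1) from by ring, Real.rpow_add (hA z), Real.rpow_one]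
  have h2p : 2 * p = (n:ℝ) + 1 := by rw [hpdef]; ring
  have hg' : ∀ z : ℝ, HasDerivAt g
      (((n:ℝ) * (1 - z^2) * ((n:ℝ)+1)^p) * ((n:ℝ)+z^2) ^ (-(p+1))) z := by
    intro z
    have h1 : HasDerivAt (fun y : ℝ => (n:ℝ) + y^2) (2*z) z := by
      simpa using ((hasDerivAt_pow 2 z).const_add (n:ℝ))
    have h2 : HasDerivAt (fun y : ℝ => ((n:ℝ)+y^2) ^ (-p))
        ((2*z) * (-p) * ((n:ℝ)+z^2)^(-p-1)) z := h1.rpow_const (Or.inl (hA z).ne')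
    have h3 : HasDerivAt (fun y : ℝ => ((n:ℝ)+1)^p * (y * ((n:ℝ)+y^2) ^ (-p)))
        (((n:ℝ)+1)^p * (1 * ((n:ℝ)+z^2)^(-p) + z * ((2*z) * (-p) * ((n:ℝ)+z^2)^(-p-1)))) z :=
      ((hasDerivAt_id' z).mul h2).const_mul _
    rw [hgfun]
    have hd : ((n:ℝ)+1)^p * (1 * ((n:ℝ)+z^2)^(-p) + z * ((2*z) * (-p) * ((n:ℝ)+z^2)^(-p-1)))
        = ((n:ℝ) * (1 - z^2) * ((n:ℝ)+1)^p) * ((n:ℝ)+z^2) ^ (-(p+1)) := by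
      rw [show (-p-1 : ℝ) = -(p+1) from by ring, hE1 z]
      linear_combination (-(((n:ℝ)+1)^p * ((n:ℝ)+z^2)^(-(p+1)) * z^2)) * h2p
    exact hd ▸ h3
  set H : ℝ → ℝ := fun z => (n:ℝ) * (1 - z^2) * ((n:ℝ)+1)^p + 2*C*(n:ℝ)^p*((n:ℝ)+z^2)
    with hHdef
  set G : ℝ → ℝ := fun z => g z - T z with hGdef
  have hG' : ∀ z : ℝ, HasDerivAt G (H z * ((n:ℝ)+z^2) ^ (-(p+1))) z := by
    intro z
    have h := (hg' z).sub (hT' z)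
    have hd : ((n:ℝ) * (1 - z^2) * ((n:ℝ)+1)^p) * ((n:ℝ)+z^2) ^ (-(p+1)) - (-(2 * f z))
        = H z * ((n:ℝ)+z^2) ^ (-(p+1)) := by
      rw [hfalt z, hE1 z]
      simp only [hHdef]
      ring
    exact hd ▸ h
  have hnp0 : (0:ℝ) < ((n:ℝ))^p := Real.rpow_pos_of_pos hn0 p
  have hKp0 : (0:ℝ) < ((n:ℝ)+1)^p := Real.rpow_pos_of_pos (by linarith) p
  have hK : ((n:ℝ))^p ≤ ((n:ℝ)+1)^p := Real.rpow_le_rpow hn0.le (by linarith) hp0.le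
  have hD : 2*C*((n:ℝ))^p ≤ (n:ℝ)*(((n:ℝ)+1)^p) := by nlinarith
  have hHanti : ∀ y₁ y₂ : ℝ, 0 ≤ y₁ → y₁ ≤ y₂ → H y₂ ≤ H y₁ := by
    intro y₁ y₂ h0 h12
    simp only [hHdef]
    have hy : y₁^2 ≤ y₂^2 := by nlinarith
    nlinarith [mul_le_mul_of_nonneg_right hD (sub_nonneg.2 hy)]
  have hTtend : Tendsto T atTop (nhds 0) := by
    have hTi : Tendsto (fun z => ∫ x in (0:ℝ)..z, f x) atTop (nhds (∫ x in Ioi (0:ℝ), f x)) :=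
      intervalIntegral_tendsto_integral_Ioi 0 hfint.integrableOn tendsto_id
    have h := (hTi.const_mul 2).const_sub 1
    rw [hIoi0] at h
    simpa [hTdef] using h
  have hgtend : Tendsto g atTop (nhds 0) := by
    have hb : Tendsto (fun z : ℝ => (((n:ℝ)+1)^p) * z ^ (-(n:ℝ))) atTop (nhds 0) := by
      simpa using (tendsto_rpow_neg_atTop hn0).const_mul (((n:ℝ)+1)^p)
    apply squeeze_zero' ?_ ?_ hb
    · filter_upwards [eventually_ge_atTop (0:ℝ)] with z hz
      simp only [hgdef]
      exact mul_nonneg hz (Real.rpow_nonneg (by positivity) p)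
    · filter_upwards [eventually_ge_atTop (1:ℝ)] with z hz
      have hz0 : (0:ℝ) < z := lt_of_lt_of_le one_pos hz
      have step1 : (((n:ℝ)+1)/((n:ℝ)+z^2)) ^ p ≤ (((n:ℝ)+1)/z^2) ^ p := by
        apply Real.rpow_le_rpow (by positivity) ?_ hp0.le
        apply div_le_div_of_nonneg_left (by positivity) (by positivity)
        linarith
      have e2 : (z^2 : ℝ) ^ p = z ^ (2*p) := by
        rw [← Real.rpow_natCast z 2, ← Real.rpow_mul hz0.le]
        norm_num
      have e : z * (((n:ℝ)+1)/z^2) ^ p = (((n:ℝ)+1)^p) * z ^ (-(n:ℝ)) := by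
        rw [Real.div_rpow (by positivity) (by positivity), e2,
          show -(n:ℝ) = 1 + -(2*p) from by rw [hpdef]; ring,
          Real.rpow_add hz0, Real.rpow_one, Real.rpow_neg hz0.le, div_eq_mul_inv]
        ring
      simp only [hgdef]
      calc z * (((n:ℝ)+1)/((n:ℝ)+z^2)) ^ p ≤ z * (((n:ℝ)+1)/z^2) ^ p :=
            mul_le_mul_of_nonneg_left step1 hz0.le
        _ = (((n:ℝ)+1)^p) * z ^ (-(n:ℝ)) := e
  have hGtend : Tendsto G atTop (nhds 0) := by
    have := hgtend.sub hTtend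
    simpa [hGdef] using this
  have hg1 : g 1 = 1 := by
    simp only [hgdef]
    norm_num
    rw [div_self (ne_of_gt (by positivity : (0:ℝ) < (n:ℝ)+1)), Real.one_rpow]
  have hG1 : 0 ≤ G 1 := by
    have hT1 : T 1 ≤ 1 := by
      simp only [hTdef]
      nlinarith [intervalIntegral.integral_nonneg (μ := volume) (f := f)
        (by norm_num : (0:ℝ) ≤ 1) (fun x _ => (hfpos x).le)]
    simp only [hGdef]
    rw [hg1]
    linarith
  have hkey : ∀ z : ℝ, 1 ≤ z → T z ≤ g z := by
    intro z hz
    have hz0 : (0:ℝ) < z := lt_of_lt_of_le one_pos hz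
    have hGz : 0 ≤ G z := by
      by_cases hHz : H z ≤ 0
      · have hanti : AntitoneOn G (Ici z) := by
          apply antitoneOn_of_deriv_nonpos (convex_Ici z)
          · exact fun y _ => ((hG' y).continuousAt).continuousWithinAt
          · intro y hy
            exact ((hG' y).differentiableAt).differentiableWithinAt
          · intro y hy
            rw [interior_Ici] at hy
            rw [(hG' y).deriv]
            apply mul_nonpos_of_nonpos_of_nonneg
            · exact le_trans (hHanti z y hz0.le (le_of_lt hy)) hHz
            · exact (Real.rpow_pos_of_pos (hA y) _).le
        refine le_of_tendsto hGtend ?_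
        filter_upwards [eventually_ge_atTop z] with y hy
        exact hanti (mem_Ici.2 le_rfl) (mem_Ici.2 hy) hy
      · push_neg at hHz
        have hmono : MonotoneOn G (Icc 1 z) := by
          apply monotoneOn_of_deriv_nonneg (convex_Icc 1 z)
          · exact fun y _ => ((hG' y).continuousAt).continuousWithinAt
          · intro y hy
            exact ((hG' y).differentiableAt).differentiableWithinAt
          · intro y hy
            rw [interior_Icc] at hy
            rw [(hG' y).deriv]
            apply mul_nonneg
            · exact le_trans hHz.le (hHanti y z (by linarith [hy.1]) hy.2.le)
            · exact (Real.rpow_pos_of_pos (hA y) _).le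
        have h1z : G 1 ≤ G z := hmono (left_mem_Icc.2 hz) (right_mem_Icc.2 hz) hz
        linarith
    simp only [hGdef] at hGz
    linarith
  constructor
  · intro z hz
    have hsm : MeasurableSet {x : ℝ | z ≤ |x|} :=
      (isClosed_le continuous_const continuous_abs).measurableSet
    have := hPs _ hsm
    rw [show {ω | z ≤ |X ω|} = {ω | X ω ∈ {x : ℝ | z ≤ |x|}} from rfl, this,
      hset_T z (by linarith)]
    exact ENNReal.ofReal_le_ofReal (hkey z hz)
  · intro z hz0 hz1
    have hsm : MeasurableSet {x : ℝ | |x| ≤ z} :=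
      (isClosed_le continuous_abs continuous_const).measurableSet
    have hseteq : {x : ℝ | |x| ≤ z} = Icc (-z) z := by ext x; simp [abs_le]
    rw [show {ω | |X ω| ≤ z} = {ω | X ω ∈ {x : ℝ | |x| ≤ z}} from rfl, hPs _ hsm]
    apply ENNReal.ofReal_le_ofReal
    rw [hseteq]
    have hbound : ∫ x in Icc (-z) z, f x ≤ C * (2*z) := by
      calc ∫ x in Icc (-z) z, f x ≤ ∫ _x in Icc (-z) z, C := by
            apply setIntegral_mono_on hfint.integrableOn
              (integrableOn_const (by rw [Real.volume_Icc]; exact ENNReal.ofReal_ne_top) enorm_ne_top)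
              measurableSet_Icc (fun x _ => hfleC x)
        _ = C * (2*z) := by
            rw [setIntegral_const, measureReal_def, Real.volume_Icc, smul_eq_mul,
              ENNReal.toReal_ofReal (by linarith)]
            ring
    have hrp : 1 ≤ (((n:ℝ)+1)/((n:ℝ)+z^2)) ^ p := by
      apply Real.one_le_rpow ?_ hp0.le
      rw [le_div_iff₀ (hA z)]
      nlinarith
    calc ∫ x in Icc (-z) z, f x ≤ C * (2*z) := hbound
      _ ≤ z * 1 := by nlinarith
      _ ≤ z * (((n:ℝ)+1)/((n:ℝ)+z^2)) ^ p := by nlinarith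
end

section
/- Let X₁, …, Xₙ be i.i.d. random variables, each uniformly distributed on the interval [0,1], and let X̄ₙ = (1/n)∑_{i=1}^n Xᵢ. Then: (i) for all z with 1/2 < z < 1, Pr{X̄ₙ ≥ z} ≤ ( (e^ϑ − 1)/(ϑ·e^{ϑz}) )ⁿ ≤ exp(−6n(z − 1/2)²), where ϑ > 0 satisfies z = 1 + 1/(e^ϑ − 1) − 1/ϑ; (ii) for all z with 0 < z < 1/2, Pr{X̄ₙ ≤ z} ≤ ( (e^ϑ − 1)/(ϑ·e^{ϑz}) )ⁿ ≤ exp(−6n(z − 1/2)²), where ϑ < 0 satisfies z = 1 + 1/(e^ϑ − 1) − 1/ϑ. -/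
open MeasureTheory ProbabilityTheory Real Filter Set

-- density measure is restriction to Icc
lemma unif_density_eq :
    (volume.withDensity (fun x => ENNReal.ofReal
      (if 0 ≤ x ∧ x ≤ 1 then (1 : ℝ) else 0))) = volume.restrict (Set.Icc (0:ℝ) 1) := by
  have h : (fun x : ℝ => ENNReal.ofReal (if 0 ≤ x ∧ x ≤ 1 then (1 : ℝ) else 0))
      = Set.indicator (Set.Icc (0:ℝ) 1) (fun _ => (1 : ENNReal)) := by
    funext x
    by_cases h : 0 ≤ x ∧ x ≤ 1 <;> simp [Set.indicator, Set.mem_Icc, h]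
  rw [h, MeasureTheory.withDensity_indicator measurableSet_Icc]
  exact MeasureTheory.withDensity_one

lemma unif_integrable {Ω : Type*} [MeasurableSpace Ω] (P : Measure Ω) (X : Ω → ℝ)
    (hm : Measurable X) (hd : Measure.map X P = volume.restrict (Set.Icc (0:ℝ) 1)) (t : ℝ) :
    Integrable (fun ω => Real.exp (t * X ω)) P := by
  have hc : Continuous (fun x : ℝ => Real.exp (t * x)) :=
    Real.continuous_exp.comp (continuous_const.mul continuous_id)
  have hg : AEStronglyMeasurable (fun x : ℝ => Real.exp (t * x)) (Measure.map X P) :=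
    hc.aestronglyMeasurable
  have h2 : Integrable (fun x : ℝ => Real.exp (t * x)) (Measure.map X P) := by
    rw [hd]
    exact hc.integrableOn_Icc
  exact (integrable_map_measure hg hm.aemeasurable).mp h2

lemma unif_mgf {Ω : Type*} [MeasurableSpace Ω] (P : Measure Ω) (X : Ω → ℝ)
    (hm : Measurable X) (hd : Measure.map X P = volume.restrict (Set.Icc (0:ℝ) 1))
    {t : ℝ} (ht : t ≠ 0) :
    mgf X P t = (Real.exp t - 1) / t := by
  have hc : Continuous (fun x : ℝ => Real.exp (t * x)) :=
    Real.continuous_exp.comp (continuous_const.mul continuous_id)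
  have hg : AEStronglyMeasurable (fun x : ℝ => Real.exp (t * x)) (Measure.map X P) :=
    hc.aestronglyMeasurable
  have h1 : mgf X P t = ∫ x, Real.exp (t * x) ∂(Measure.map X P) :=
    (MeasureTheory.integral_map hm.aemeasurable hg).symm
  rw [h1, hd, MeasureTheory.integral_Icc_eq_integral_Ioc,
    ← intervalIntegral.integral_of_le (zero_le_one)]
  have hderiv : ∀ x ∈ Set.uIcc (0:ℝ) 1,
      HasDerivAt (fun y => Real.exp (t * y) / t) (Real.exp (t * x)) x := by
    intro x _
    have h := ((Real.hasDerivAt_exp (t * x)).comp x ((hasDerivAt_id x).const_mul t))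
    have h2 := h.div_const t
    simpa [mul_comm, mul_div_assoc, mul_div_cancel_left₀ _ ht] using h2
  rw [intervalIntegral.integral_eq_sub_of_hasDerivAt hderiv
    ((hc.intervalIntegrable 0 1))]
  simp [mul_comm]
  ring


lemma nonneg_of_deriv_aux {f f' : ℝ → ℝ} (hf : ∀ x, HasDerivAt f (f' x) x)
    (h0 : f 0 = 0) (hpos : ∀ x, 0 ≤ x → 0 ≤ f' x) : ∀ x, 0 ≤ x → 0 ≤ f x := by
  intro x hx
  have hmono : MonotoneOn f (Set.Ici (0:ℝ)) := by
    apply monotoneOn_of_deriv_nonneg (convex_Ici 0)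
    · exact fun y _ => (hf y).continuousAt.continuousWithinAt
    · intro y _; exact ((hf y).differentiableAt).differentiableWithinAt
    · intro y hy
      rw [(hf y).deriv]
      exact hpos y (le_of_lt (by simpa [interior_Ici] using hy))
  calc (0:ℝ) = f 0 := h0.symm
    _ ≤ f x := hmono Set.self_mem_Ici hx hx

lemma pade_exp {x : ℝ} (hx : 0 ≤ x) :
    x^2 + 6*x + 12 ≤ Real.exp x * (x^2 - 6*x + 12) := by
  have h2 : ∀ y : ℝ, 0 ≤ y → 0 ≤ Real.exp y * (y^2 - 2*y + 2) - 2 := by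
    apply nonneg_of_deriv_aux (f' := fun y => Real.exp y * y^2)
    · intro y
      have hp : HasDerivAt (fun y : ℝ => y^2 - 2*y + 2) (2*y - 2) y := by
        have := ((hasDerivAt_pow 2 y).sub ((hasDerivAt_id y).const_mul (2:ℝ))).add_const (2:ℝ)
        exact this.congr_deriv (by ring)
      have := ((Real.hasDerivAt_exp y).mul hp).sub_const 2
      exact this.congr_deriv (by beta_reduce; ring)
    · norm_num
    · intro y _; positivity
  have h1 : ∀ y : ℝ, 0 ≤ y → 0 ≤ Real.exp y * (y^2 - 4*y + 6) - (2*y + 6) := by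
    apply nonneg_of_deriv_aux (f' := fun y => Real.exp y * (y^2 - 2*y + 2) - 2)
    · intro y
      have hp : HasDerivAt (fun y : ℝ => y^2 - 4*y + 6) (2*y - 4) y := by
        have := ((hasDerivAt_pow 2 y).sub ((hasDerivAt_id y).const_mul (4:ℝ))).add_const (6:ℝ)
        exact this.congr_deriv (by ring)
      have := ((Real.hasDerivAt_exp y).mul hp).sub
        (((hasDerivAt_id y).const_mul (2:ℝ)).add_const (6:ℝ))
      exact this.congr_deriv (by beta_reduce; ring)
    · norm_num
    · exact h2
  have h0 : ∀ y : ℝ, 0 ≤ y → 0 ≤ Real.exp y * (y^2 - 6*y + 12) - (y^2 + 6*y + 12) := by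
    apply nonneg_of_deriv_aux (f' := fun y => Real.exp y * (y^2 - 4*y + 6) - (2*y + 6))
    · intro y
      have hp : HasDerivAt (fun y : ℝ => y^2 - 6*y + 12) (2*y - 6) y := by
        have := ((hasDerivAt_pow 2 y).sub ((hasDerivAt_id y).const_mul (6:ℝ))).add_const (12:ℝ)
        exact this.congr_deriv (by ring)
      have := ((Real.hasDerivAt_exp y).mul hp).sub
        ((((hasDerivAt_pow 2 y)).add ((hasDerivAt_id y).const_mul (6:ℝ))).add_const (12:ℝ))
      exact this.congr_deriv (by beta_reduce; ring)
    · norm_num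
    · exact h1
  linarith [h0 x hx]

lemma exp_sub_one_ge {x : ℝ} (hx : 0 ≤ x) : x * Real.exp (x/2) ≤ Real.exp x - 1 := by
  have hs : x/2 ≤ Real.sinh (x/2) := Real.self_le_sinh_iff.mpr (by linarith)
  rw [Real.sinh_eq] at hs
  have h := mul_le_mul_of_nonneg_left hs (le_of_lt (Real.exp_pos (x/2)))
  have e1 : Real.exp (x/2) * Real.exp (x/2) = Real.exp x := by
    rw [← Real.exp_add]; norm_num
  have e2 : Real.exp (x/2) * Real.exp (-(x/2)) = 1 := by
    rw [← Real.exp_add]; norm_num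
  nlinarith [Real.exp_pos (x/2)]

noncomputable def hfun (t : ℝ) : ℝ :=
  t + t * (Real.exp t - 1)⁻¹ - 1 - (Real.log (Real.exp t - 1) - Real.log t)
    - 6 * (1/2 + ((Real.exp t - 1)⁻¹ - t⁻¹))^2

noncomputable def hfun' (t : ℝ) : ℝ :=
  (1/t^2 - Real.exp t/(Real.exp t - 1)^2)
    * (t - 12 * (1/2 + ((Real.exp t - 1)⁻¹ - t⁻¹)))

lemma exp_sub_one_pos {t : ℝ} (ht : 0 < t) : 0 < Real.exp t - 1 := by
  have := Real.one_lt_exp_iff.mpr ht  -- check name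
  linarith

lemma hfun_hasDeriv {t : ℝ} (ht : 0 < t) : HasDerivAt hfun (hfun' t) t := by
  have hne : Real.exp t - 1 ≠ 0 := ne_of_gt (exp_sub_one_pos ht)
  have hE1 : HasDerivAt (fun t => Real.exp t - 1) (Real.exp t) t :=
    (Real.hasDerivAt_exp t).sub_const 1
  have hinv : HasDerivAt (fun t => (Real.exp t - 1)⁻¹)
      (-Real.exp t / (Real.exp t - 1)^2) t := hE1.inv hne
  have htinv : HasDerivAt (fun t : ℝ => t⁻¹) (-(t^2)⁻¹) t := hasDerivAt_inv ht.ne'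
  have hq : HasDerivAt (fun t => 1/2 + ((Real.exp t - 1)⁻¹ - t⁻¹))
      (-Real.exp t / (Real.exp t - 1)^2 - -(t^2)⁻¹) t := (hinv.sub htinv).const_add (1/2)
  have hq2 := (hq.pow 2).const_mul (6:ℝ)
  have hmul : HasDerivAt (fun t => t * (Real.exp t - 1)⁻¹)
      (1 * (Real.exp t - 1)⁻¹ + t * (-Real.exp t / (Real.exp t - 1)^2)) t :=
    (hasDerivAt_id t).mul hinv
  have hlog1 : HasDerivAt (fun t => Real.log (Real.exp t - 1))
      (Real.exp t / (Real.exp t - 1)) t := hE1.log hne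
  have hlog2 : HasDerivAt Real.log t⁻¹ t := Real.hasDerivAt_log ht.ne'
  have H := ((((hasDerivAt_id t).add hmul).sub_const 1).sub (hlog1.sub hlog2)).sub hq2
  refine H.congr_deriv ?_
  unfold hfun'
  have htne : t ≠ 0 := ht.ne'
  simp only [Nat.cast_ofNat, show (2:ℕ) - 1 = 1 from rfl, pow_one]
  field_simp
  ring

lemma hfun'_nonneg {t : ℝ} (ht : 0 < t) : 0 ≤ hfun' t := by
  have hE1 : 0 < Real.exp t - 1 := exp_sub_one_pos ht
  have hexp : Real.exp (t/2) ^ 2 = Real.exp t := by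
    rw [← Real.exp_nat_mul]; norm_num; ring_nf
  apply mul_nonneg
  · rw [sub_nonneg, div_le_div_iff₀ (by positivity) (by positivity)]
    nlinarith [exp_sub_one_ge ht.le, Real.exp_pos (t/2), Real.exp_pos t,
      mul_pos ht (Real.exp_pos (t/2))]
  · have expand : t - 12*(1/2 + ((Real.exp t - 1)⁻¹ - t⁻¹))
        = (Real.exp t*(t^2-6*t+12) - (t^2+6*t+12)) / (t * (Real.exp t - 1)) := by
      field_simp
      ring
    rw [expand]
    apply div_nonneg (by linarith [pade_exp ht.le]) (by positivity)

lemma hfun_tendsto : Tendsto hfun (nhdsWithin 0 (Set.Ioi 0)) (nhds 0) := by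
  have lim_slope : Tendsto (fun t => (Real.exp t - 1)/t) (nhdsWithin 0 (Set.Ioi (0:ℝ))) (nhds 1) := by
    have h := hasDerivAt_iff_tendsto_slope.mp (Real.hasDerivAt_exp 0)
    rw [Real.exp_zero] at h
    have h2 := h.mono_left (nhdsWithin_mono 0 (fun x hx => ne_of_gt hx : Set.Ioi (0:ℝ) ⊆ {(0:ℝ)}ᶜ))
    refine h2.congr' ?_
    filter_upwards [self_mem_nhdsWithin] with t (htpos : t ∈ Set.Ioi (0:ℝ))
    rw [slope_def_field]
    simp [Real.exp_zero]
  have lim_f2 : Tendsto (fun t => t * (Real.exp t - 1)⁻¹) (nhdsWithin 0 (Set.Ioi (0:ℝ))) (nhds 1) := by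
    have h := lim_slope.inv₀ one_ne_zero
    rw [inv_one] at h
    refine h.congr' ?_
    filter_upwards [self_mem_nhdsWithin] with t htpos
    have hne : Real.exp t - 1 ≠ 0 := ne_of_gt (exp_sub_one_pos htpos)
    have htne : t ≠ 0 := ne_of_gt htpos
    field_simp
  have lim_log : Tendsto (fun t => Real.log (Real.exp t - 1) - Real.log t)
      (nhdsWithin 0 (Set.Ioi (0:ℝ))) (nhds 0) := by
    have h := ((Real.continuousAt_log one_ne_zero).tendsto).comp lim_slope
    rw [Real.log_one] at h
    refine h.congr' ?_
    filter_upwards [self_mem_nhdsWithin] with t htpos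
    simp only [Function.comp_apply]
    rw [Real.log_div (ne_of_gt (exp_sub_one_pos htpos)) (ne_of_gt htpos)]
  have lim_f1 : Tendsto (fun t => (Real.exp t - 1 - t)/t^2)
      (nhdsWithin 0 (Set.Ioi (0:ℝ))) (nhds (1/2)) := by
    have hsq : Tendsto (fun t => (Real.exp t - 1 - t)/t^2 - 1/2)
        (nhdsWithin 0 (Set.Ioi (0:ℝ))) (nhds 0) := by
      apply squeeze_zero_norm' (a := fun t => 2/9 * t)
      · filter_upwards [Ioo_mem_nhdsGT_of_mem (Set.left_mem_Ico.mpr zero_lt_one)]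
          with t ht
        obtain ⟨ht0, ht1⟩ := ht
        have hb := Real.exp_bound (x := t) (by rw [abs_of_pos ht0]; exact ht1.le)
          (n := 3) (by norm_num)
        have hsum : ∑ m ∈ Finset.range 3, t^m/(m.factorial : ℝ) = 1 + t + t^2/2 := by
          norm_num [Finset.sum_range_succ]
        rw [hsum, abs_of_pos ht0] at hb
        have ht2 : (0:ℝ) < t^2 := by positivity
        have heq : (Real.exp t - 1 - t)/t^2 - 1/2 = (Real.exp t - (1 + t + t^2/2))/t^2 := by
          field_simp; ring
        rw [Real.norm_eq_abs, heq, abs_div, abs_of_pos ht2]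
        rw [div_le_iff₀ ht2]
        have hfac : ((3:ℕ).succ : ℝ) / ((3:ℕ).factorial * (3:ℕ) : ℝ) = 2/9 := by
          norm_num [Nat.factorial]
        rw [hfac] at hb
        nlinarith
      · have h9 : Tendsto (fun t : ℝ => 2/9 * t) (nhds 0) (nhds 0) := by
          have hid : Tendsto (fun t : ℝ => t) (nhds (0:ℝ)) (nhds 0) := fun s hs => hs
          have := Filter.Tendsto.const_mul (2/9 : ℝ) hid
          simpa using this
        exact h9.mono_left nhdsWithin_le_nhds
    have := hsq.add (tendsto_const_nhds (x := (1/2 : ℝ)))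
    simp only [zero_add] at this
    refine this.congr (fun t => by ring)
  have lim_B : Tendsto (fun t => (Real.exp t - 1)⁻¹ - t⁻¹)
      (nhdsWithin 0 (Set.Ioi (0:ℝ))) (nhds (-(1/2))) := by
    have h := (lim_f1.neg).mul lim_f2
    rw [show -(1/2 : ℝ) * 1 = -(1/2) by norm_num] at h
    refine h.congr' ?_
    filter_upwards [self_mem_nhdsWithin] with t htpos
    have hne : Real.exp t - 1 ≠ 0 := ne_of_gt (exp_sub_one_pos htpos)
    have htne : t ≠ 0 := ne_of_gt htpos
    field_simp
    ring
  have T1 : Tendsto (fun t : ℝ => t) (nhdsWithin 0 (Set.Ioi (0:ℝ))) (nhds 0) :=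
    tendsto_id.mono_left nhdsWithin_le_nhds
  have comb := (((T1.add lim_f2).sub_const 1).sub lim_log).sub
    (Filter.Tendsto.const_mul (6:ℝ) (((tendsto_const_nhds (x := (1/2:ℝ))).add lim_B).pow 2))
  have hval : (0 + 1 - 1 - 0 - 6*((1/2:ℝ) + -(1/2))^2) = 0 := by norm_num
  rw [hval] at comb
  exact comb.congr (fun t => by unfold hfun; ring)

lemma hfun_nonneg {t : ℝ} (ht : 0 < t) : 0 ≤ hfun t := by
  have mono : MonotoneOn hfun (Set.Ioi (0:ℝ)) := by
    apply monotoneOn_of_deriv_nonneg (convex_Ioi 0)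
    · intro y hy; exact ((hfun_hasDeriv hy).continuousAt).continuousWithinAt
    · intro y hy
      rw [interior_Ioi] at hy
      exact ((hfun_hasDeriv hy).differentiableAt).differentiableWithinAt
    · intro y hy
      rw [interior_Ioi] at hy
      rw [(hfun_hasDeriv hy).deriv]
      exact hfun'_nonneg hy
  have hev : ∀ᶠ s in nhdsWithin 0 (Set.Ioi (0:ℝ)), hfun s ≤ hfun t := by
    filter_upwards [Ioo_mem_nhdsGT_of_mem (Set.left_mem_Ico.mpr ht)] with s hs
    exact mono hs.1 (Set.mem_Ioi.mpr ht) hs.2.le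
  exact le_of_tendsto hfun_tendsto hev

lemma core_pos {z ϑ : ℝ} (hϑ : 0 < ϑ) (hz : z = 1 + 1/(Real.exp ϑ - 1) - 1/ϑ) :
    (Real.exp ϑ - 1)/(ϑ * Real.exp (ϑ * z)) ≤ Real.exp (-(6*(z - 1/2)^2)) := by
  have hE1 : 0 < Real.exp ϑ - 1 := exp_sub_one_pos hϑ
  have e1 : ϑ * z = ϑ + ϑ*(Real.exp ϑ - 1)⁻¹ - 1 := by
    rw [hz]; field_simp
  have e2 : z - 1/2 = 1/2 + ((Real.exp ϑ - 1)⁻¹ - ϑ⁻¹) := by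
    rw [hz]; ring
  have h0 := hfun_nonneg hϑ
  unfold hfun at h0
  have key : Real.log (Real.exp ϑ - 1) - Real.log ϑ - ϑ*z ≤ -(6*(z-1/2)^2) := by
    rw [e1, e2]; linarith
  have heq : (Real.exp ϑ - 1)/(ϑ * Real.exp (ϑ * z))
      = Real.exp (Real.log (Real.exp ϑ - 1) - Real.log ϑ - ϑ*z) := by
    rw [Real.exp_sub, Real.exp_sub, Real.exp_log hE1, Real.exp_log hϑ]
    field_simp
  rw [heq]
  exact Real.exp_le_exp.mpr key

lemma core_neg {z ϑ : ℝ} (hϑ : ϑ < 0) (hz : z = 1 + 1/(Real.exp ϑ - 1) - 1/ϑ) :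
    (Real.exp ϑ - 1)/(ϑ * Real.exp (ϑ * z)) ≤ Real.exp (-(6*(z - 1/2)^2)) := by
  set t := -ϑ with htdef
  have ht : 0 < t := by simp [htdef]; linarith
  have hEt : 0 < Real.exp t - 1 := exp_sub_one_pos ht
  have hEϑ : Real.exp ϑ - 1 < 0 := by
    have : Real.exp ϑ < 1 := Real.exp_lt_one_iff.mpr hϑ
    linarith
  have hϑt : ϑ = -t := by simp [htdef]
  have hexpϑ : Real.exp ϑ = (Real.exp t)⁻¹ := by rw [hϑt, Real.exp_neg]
  set w : ℝ := 1 + 1/(Real.exp t - 1) - 1/t with hw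
  have key1 : z = 1 - w := by
    rw [hz, hw, hϑt, Real.exp_neg]
    have h1 : Real.exp t ≠ 0 := (Real.exp_pos t).ne'
    have h2 : Real.exp t - 1 ≠ 0 := hEt.ne'
    have h2' : (1:ℝ) - Real.exp t ≠ 0 := fun hc => h2 (by linarith)
    have h3 : t ≠ 0 := ht.ne'
    have h5 : ϑ ≠ 0 := hϑ.ne
    field_simp
    ring
  have key3 : (z - 1/2)^2 = (w - 1/2)^2 := by rw [key1]; ring
  have key2 : (Real.exp ϑ - 1)/(ϑ * Real.exp (ϑ * z))
      = (Real.exp t - 1)/(t * Real.exp (t * w)) := by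
    rw [key1, hϑt]
    rw [show -t * (1 - w) = -t + t*w by ring, Real.exp_add, Real.exp_neg]
    have h1 : Real.exp t ≠ 0 := (Real.exp_pos t).ne'
    have h3 : t ≠ 0 := ht.ne'
    have h4 : Real.exp (t*w) ≠ 0 := (Real.exp_pos _).ne'
    field_simp
    ring
  rw [key2, key3]
  exact core_pos ht hw

lemma base_nonneg {z ϑ : ℝ} (hϑ : ϑ ≠ 0) :
    0 ≤ (Real.exp ϑ - 1)/(ϑ * Real.exp (ϑ * z)) := by
  rcases lt_or_gt_of_ne hϑ with h | h
  · refine div_nonneg_iff.mpr (Or.inr ⟨?_, ?_⟩)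
    · have : Real.exp ϑ < 1 := Real.exp_lt_one_iff.mpr h
      linarith
    · exact (mul_nonpos_iff.mpr (Or.inr ⟨h.le, (Real.exp_pos _).le⟩))
  · apply div_nonneg
    · have := Real.one_lt_exp_iff.mpr h
      linarith
    · positivity

lemma core_pow (n : ℕ) {z ϑ : ℝ} (hϑ : ϑ ≠ 0)
    (hbase : (Real.exp ϑ - 1)/(ϑ * Real.exp (ϑ * z)) ≤ Real.exp (-(6*(z - 1/2)^2))) :
    ((Real.exp ϑ - 1)/(ϑ * Real.exp (ϑ * z)))^n ≤ Real.exp (-(6*n*(z - 1/2)^2)) := by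
  have h1 := pow_le_pow_left₀ (base_nonneg hϑ) hbase n
  refine h1.trans_eq ?_
  rw [← Real.exp_nat_mul]
  congr 1
  ring

lemma chernoff_form {n : ℕ} {z ϑ : ℝ} (hϑ : ϑ ≠ 0) :
    Real.exp (-ϑ * ((n:ℝ)*z)) * ((Real.exp ϑ - 1)/ϑ)^n
      = ((Real.exp ϑ - 1)/(ϑ * Real.exp (ϑ * z)))^n := by
  have h1 : (Real.exp ϑ - 1)/(ϑ * Real.exp (ϑ * z))
      = ((Real.exp ϑ - 1)/ϑ) * Real.exp (-(ϑ*z)) := by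
    rw [Real.exp_neg]
    field_simp
  rw [h1, mul_pow, ← Real.exp_nat_mul]
  rw [show (n:ℝ) * -(ϑ*z) = -ϑ * ((n:ℝ)*z) by ring]
  ring

lemma prob_upper {Ω : Type*} [MeasurableSpace Ω] (P : Measure Ω) [IsProbabilityMeasure P]
    (n : ℕ) (hn : 0 < n) (X : Fin n → Ω → ℝ)
    (hmeas : ∀ i, Measurable (X i))
    (hindep : iIndepFun X P)
    (hdist : ∀ i, Measure.map (X i) P = volume.restrict (Set.Icc (0:ℝ) 1))
    (z ϑ : ℝ) (hϑ : 0 < ϑ) :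
    P {ω | z ≤ (∑ i, X i ω) / n} ≤
      ENNReal.ofReal (((Real.exp ϑ - 1) / (ϑ * Real.exp (ϑ * z))) ^ n) := by
  have hint : ∀ i ∈ Finset.univ, Integrable (fun ω => Real.exp (ϑ * X i ω)) P :=
    fun i _ => unif_integrable P (X i) (hmeas i) (hdist i) ϑ
  have hintS : Integrable (fun ω => Real.exp (ϑ * (∑ i, X i) ω)) P :=
    hindep.integrable_exp_mul_sum hmeas hint
  have hset : {ω | z ≤ (∑ i, X i ω) / n} = {ω | (n:ℝ)*z ≤ (∑ i, X i) ω} := by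
    ext ω
    simp only [Set.mem_setOf_eq, Finset.sum_apply]
    rw [le_div_iff₀ (by exact_mod_cast hn : (0:ℝ) < n), mul_comm]
  have key := measure_ge_le_exp_mul_mgf (μ := P) (X := ∑ i, X i) ((n:ℝ)*z) hϑ.le hintS
  have hmgf : mgf (∑ i, X i) P ϑ = ((Real.exp ϑ - 1)/ϑ)^n := by
    rw [hindep.mgf_sum hmeas Finset.univ]
    rw [Finset.prod_congr rfl (fun i _ => unif_mgf P (X i) (hmeas i) (hdist i) hϑ.ne')]
    rw [Finset.prod_const, Finset.card_univ, Fintype.card_fin]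
  rw [hmgf, chernoff_form hϑ.ne'] at key
  rw [hset]
  calc P {ω | (n:ℝ)*z ≤ (∑ i, X i) ω}
      = ENNReal.ofReal ((P {ω | (n:ℝ)*z ≤ (∑ i, X i) ω}).toReal) :=
        (ENNReal.ofReal_toReal (measure_ne_top P _)).symm
    _ ≤ ENNReal.ofReal (((Real.exp ϑ - 1) / (ϑ * Real.exp (ϑ * z))) ^ n) :=
        ENNReal.ofReal_le_ofReal key

lemma prob_lower {Ω : Type*} [MeasurableSpace Ω] (P : Measure Ω) [IsProbabilityMeasure P]
    (n : ℕ) (hn : 0 < n) (X : Fin n → Ω → ℝ)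
    (hmeas : ∀ i, Measurable (X i))
    (hindep : iIndepFun X P)
    (hdist : ∀ i, Measure.map (X i) P = volume.restrict (Set.Icc (0:ℝ) 1))
    (z ϑ : ℝ) (hϑ : ϑ < 0) :
    P {ω | (∑ i, X i ω) / n ≤ z} ≤
      ENNReal.ofReal (((Real.exp ϑ - 1) / (ϑ * Real.exp (ϑ * z))) ^ n) := by
  have hint : ∀ i ∈ Finset.univ, Integrable (fun ω => Real.exp (ϑ * X i ω)) P :=
    fun i _ => unif_integrable P (X i) (hmeas i) (hdist i) ϑ
  have hintS : Integrable (fun ω => Real.exp (ϑ * (∑ i, X i) ω)) P :=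
    hindep.integrable_exp_mul_sum hmeas hint
  have hset : {ω | (∑ i, X i ω) / n ≤ z} = {ω | (∑ i, X i) ω ≤ (n:ℝ)*z} := by
    ext ω
    simp only [Set.mem_setOf_eq, Finset.sum_apply]
    rw [div_le_iff₀ (by exact_mod_cast hn : (0:ℝ) < n), mul_comm]
  have key := measure_le_le_exp_mul_mgf (μ := P) (X := ∑ i, X i) ((n:ℝ)*z) hϑ.le hintS
  have hmgf : mgf (∑ i, X i) P ϑ = ((Real.exp ϑ - 1)/ϑ)^n := by
    rw [hindep.mgf_sum hmeas Finset.univ]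
    rw [Finset.prod_congr rfl (fun i _ => unif_mgf P (X i) (hmeas i) (hdist i) hϑ.ne)]
    rw [Finset.prod_const, Finset.card_univ, Fintype.card_fin]
  rw [hmgf, chernoff_form hϑ.ne] at key
  rw [hset]
  calc P {ω | (∑ i, X i) ω ≤ (n:ℝ)*z}
      = ENNReal.ofReal ((P {ω | (∑ i, X i) ω ≤ (n:ℝ)*z}).toReal) :=
        (ENNReal.ofReal_toReal (measure_ne_top P _)).symm
    _ ≤ ENNReal.ofReal (((Real.exp ϑ - 1) / (ϑ * Real.exp (ϑ * z))) ^ n) :=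
        ENNReal.ofReal_le_ofReal key

/-- Tail bounds for the sample mean of `n` i.i.d. random variables uniformly
distributed on `[0,1]`. -/
theorem uniform_sample_mean_tail
    {Ω : Type*} [MeasurableSpace Ω] (P : Measure Ω) [IsProbabilityMeasure P]
    (n : ℕ) (hn : 0 < n) (X : Fin n → Ω → ℝ)
    (hmeas : ∀ i, Measurable (X i))
    (hindep : iIndepFun X P)
    (hdist : ∀ i, Measure.map (X i) P =
      volume.withDensity (fun x => ENNReal.ofReal
        (if 0 ≤ x ∧ x ≤ 1 then (1 : ℝ) else 0))) :
    (∀ z ϑ : ℝ, 1 / 2 < z → z < 1 → 0 < ϑ →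
      z = 1 + 1 / (Real.exp ϑ - 1) - 1 / ϑ →
      P {ω | z ≤ (∑ i, X i ω) / n} ≤
        ENNReal.ofReal (((Real.exp ϑ - 1) / (ϑ * Real.exp (ϑ * z))) ^ n) ∧
      ((Real.exp ϑ - 1) / (ϑ * Real.exp (ϑ * z))) ^ n ≤
        Real.exp (-(6 * n * (z - 1 / 2) ^ 2))) ∧
    (∀ z ϑ : ℝ, 0 < z → z < 1 / 2 → ϑ < 0 →
      z = 1 + 1 / (Real.exp ϑ - 1) - 1 / ϑ →
      P {ω | (∑ i, X i ω) / n ≤ z} ≤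
        ENNReal.ofReal (((Real.exp ϑ - 1) / (ϑ * Real.exp (ϑ * z))) ^ n) ∧
      ((Real.exp ϑ - 1) / (ϑ * Real.exp (ϑ * z))) ^ n ≤
        Real.exp (-(6 * n * (z - 1 / 2) ^ 2))) := by
  have hdist' : ∀ i, Measure.map (X i) P = volume.restrict (Set.Icc (0:ℝ) 1) := by
    intro i; rw [hdist i, unif_density_eq]
  constructor
  · intro z ϑ _ _ hϑ hz
    refine ⟨prob_upper P n hn X hmeas hindep hdist' z ϑ hϑ, ?_⟩
    have hbase := core_pos hϑ hz
    have h := core_pow n hϑ.ne' hbase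
    convert h using 3 <;> push_cast <;> ring
  · intro z ϑ _ _ hϑ hz
    refine ⟨prob_lower P n hn X hmeas hindep hdist' z ϑ hϑ, ?_⟩
    have hbase := core_neg hϑ hz
    have h := core_pow n hϑ.ne hbase
    convert h using 3 <;> push_cast <;> ring
end
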